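/- arXiv:1810.00677 — 2 statements merged into one kernel-verified Lean document; each statement's English description precedes it below -/
import Mathlib

section
/- Let ν be a Lévy measure on ℝ^d∖{0} satisfying A(w,l) with scaling function w and scaling factor l, and let ς(r):=ν({y:|y|>r}) for r>0. Then there exist constants C₁,C₂>0 such that C₁ ς(r) ≤ w(r)^{−1} ≤ C₂ ς(r) for all r>0. -/
open MeasureTheory Real Set Filter
open scoped ENNReal RealInnerProductSpace Topology Classical

noncomputable section

/-- Euclidean space `ℝ^d`. -/
abbrev Rd (d : ℕ) := EuclideanSpace ℝ (Fin d)

variable {d : ℕ}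

/-- sup norm `|u|_0`. -/
def nrm0 {E : Type*} [NormedAddCommGroup E] (u : Rd d → E) : ℝ := ⨆ x, ‖u x‖

/-- generalized Hölder seminorm `[u]_β` w.r.t. the scaling function `w`. -/
def semiH {E : Type*} [NormedAddCommGroup E] (w : ℝ → ℝ) (β : ℝ) (u : Rd d → E) : ℝ :=
  ⨆ pr : Rd d × {h : Rd d // h ≠ 0}, ‖u (pr.1 + pr.2.1) - u pr.1‖ / (w ‖pr.2.1‖) ^ β

/-- generalized Hölder norm `|u|_β = |u|_0 + [u]_β`. -/
def hNorm {E : Type*} [NormedAddCommGroup E] (w : ℝ → ℝ) (β : ℝ) (u : Rd d → E) : ℝ :=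
  nrm0 u + semiH w β u

/-- membership in the generalized Hölder class `C̃^β(ℝ^d)`. -/
def MemH {E : Type*} [NormedAddCommGroup E] (w : ℝ → ℝ) (β : ℝ) (u : Rd d → E) : Prop :=
  BddAbove (range fun x => ‖u x‖) ∧
  BddAbove (range fun pr : Rd d × {h : Rd d // h ≠ 0} =>
    ‖u (pr.1 + pr.2.1) - u pr.1‖ / (w ‖pr.2.1‖) ^ β)

/-- the cutoff function `χ_α`. -/
def chiA (α : ℝ) (y : Rd d) : ℝ :=
  if 1 < α then 1 else if α = 1 then (if ‖y‖ ≤ 1 then 1 else 0) else 0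

/-- the operator `L^μ`. -/
def Lop (μ : Measure (Rd d)) (α : ℝ) (u : Rd d → ℝ) (x : Rd d) : ℝ :=
  ∫ y, (u (x + y) - u x - chiA α y * fderiv ℝ u x y) ∂μ

/-- `|u|_{1+β} = |u|_0 + |L^μ u|_0 + [L^μ u]_β`. -/
def hNorm1 (w : ℝ → ℝ) (β : ℝ) (μ : Measure (Rd d)) (α : ℝ) (u : Rd d → ℝ) : ℝ :=
  nrm0 u + nrm0 (Lop μ α u) + semiH w β (Lop μ α u)

/-- membership in `C̃^{1+β}(ℝ^d)`. -/
def MemH1 (w : ℝ → ℝ) (β : ℝ) (μ : Measure (Rd d)) (α : ℝ) (u : Rd d → ℝ) : Prop :=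
  BddAbove (range fun x => |u x|) ∧ MemH w β (Lop μ α u)

/-- parabolic sup norm over `H_T = [0,T]×ℝ^d`. -/
def nrm0T (T : ℝ) (u : ℝ → Rd d → ℝ) : ℝ :=
  ⨆ pr : Icc (0:ℝ) T × Rd d, |u pr.1.val pr.2|

/-- parabolic Hölder seminorm over `H_T`. -/
def semiHT (w : ℝ → ℝ) (β T : ℝ) (u : ℝ → Rd d → ℝ) : ℝ :=
  ⨆ pr : Icc (0:ℝ) T × Rd d × {h : Rd d // h ≠ 0},
    |u pr.1.val (pr.2.1 + pr.2.2.val) - u pr.1.val pr.2.1| / (w ‖pr.2.2.val‖) ^ β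

/-- parabolic Hölder norm `|u|_β` on `H_T`. -/
def hNormT (w : ℝ → ℝ) (β T : ℝ) (u : ℝ → Rd d → ℝ) : ℝ := nrm0T T u + semiHT w β T u

/-- membership in `C̃^β(H_T)`. -/
def MemHT (w : ℝ → ℝ) (β T : ℝ) (u : ℝ → Rd d → ℝ) : Prop :=
  BddAbove (range fun pr : Icc (0:ℝ) T × Rd d => |u pr.1.val pr.2|) ∧
  BddAbove (range fun pr : Icc (0:ℝ) T × Rd d × {h : Rd d // h ≠ 0} =>
    |u pr.1.val (pr.2.1 + pr.2.2.val) - u pr.1.val pr.2.1| / (w ‖pr.2.2.val‖) ^ β)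

/-- `L^μ` acting on time dependent functions. -/
def LopT (μ : Measure (Rd d)) (α : ℝ) (u : ℝ → Rd d → ℝ) : ℝ → Rd d → ℝ :=
  fun t => Lop μ α (u t)

/-- parabolic norm `|u|_{1+β}` on `H_T`. -/
def hNorm1T (w : ℝ → ℝ) (β T : ℝ) (μ : Measure (Rd d)) (α : ℝ) (u : ℝ → Rd d → ℝ) : ℝ :=
  nrm0T T u + nrm0T T (LopT μ α u) + semiHT w β T (LopT μ α u)

/-- membership in `C̃^{1+β}(H_T)`. -/
def MemH1T (w : ℝ → ℝ) (β T : ℝ) (μ : Measure (Rd d)) (α : ℝ) (u : ℝ → Rd d → ℝ) : Prop :=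
  BddAbove (range fun pr : Icc (0:ℝ) T × Rd d => |u pr.1.val pr.2|) ∧
  MemHT w β T (LopT μ α u)

/-- `|v|_{κ+β} := |v|_0 + |L^μ v|_0 + [L^μ v]_{κ+β-1}` (case `κ+β>1`). -/
def hNormK (w : ℝ → ℝ) (κ β : ℝ) (μ : Measure (Rd d)) (α : ℝ) (v : Rd d → ℝ) : ℝ :=
  nrm0 v + nrm0 (Lop μ α v) + semiH w (κ + β - 1) (Lop μ α v)

/-- `|v|_{κ+β}`, piecewise according to `κ+β<1` or `κ+β>1`. -/
def hNormKB (w : ℝ → ℝ) (κ β : ℝ) (μ : Measure (Rd d)) (α : ℝ) (v : Rd d → ℝ) : ℝ :=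
  if κ + β < 1 then nrm0 v + semiH w (κ + β) v
  else nrm0 v + nrm0 (Lop μ α v) + semiH w (κ + β - 1) (Lop μ α v)

/-- a Lévy measure on `ℝ^d∖{0}`. -/
def IsLevy (ν : Measure (Rd d)) : Prop :=
  ν {0} = 0 ∧ ∫⁻ y, ENNReal.ofReal (min (‖y‖ ^ 2) 1) ∂ν < ⊤

/-- `ν` has order `α`. -/
def HasOrder (ν : Measure (Rd d)) (α : ℝ) : Prop :=
  α = sInf {σ : ℝ | σ ∈ Ioo (0:ℝ) 2 ∧
    (∫⁻ y in {y : Rd d | ‖y‖ ≤ 1}, ENNReal.ofReal (‖y‖ ^ σ) ∂ν) < ⊤}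

/-- the rescaled measure `ν_R`. -/
def nuScaled (ν : Measure (Rd d)) (R : ℝ) : Measure (Rd d) :=
  Measure.map (fun y => R⁻¹ • y) ν

/-- the measure `ν̃_R = w(R) ν_R`. -/
def nuTilde (w : ℝ → ℝ) (ν : Measure (Rd d)) (R : ℝ) : Measure (Rd d) :=
  ENNReal.ofReal (w R) • nuScaled ν R

/-- `w` is a scaling function with scaling factor `l`, normalized by `w(1)=1`. -/
structure ScalingPair (w l : ℝ → ℝ) : Prop where
  w_pos : ∀ r > 0, 0 < w r
  w_cont : ContinuousOn w (Ioi 0)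
  w_zero : Tendsto w (𝓝[>] 0) (𝓝 0)
  w_top : Tendsto w atTop atTop
  w_one : w 1 = 1
  l_pos : ∀ r > 0, 0 < l r
  l_mono : MonotoneOn l (Ioi 0)
  l_cont : ContinuousOn l (Ioi 0)
  l_zero : Tendsto l (𝓝[>] 0) (𝓝 0)
  scale : ∀ ε > 0, ∀ r > 0, w (ε * r) ≤ l ε * w r

/-- the function `υ` of assumption A(w,l)(i). -/
def upsilonA (α : ℝ) (μ0 : Measure (Rd d)) (ξ : Rd d) : ℝ :=
  ∫ y, chiA α y * ‖y‖ * min (‖ξ‖ * ‖y‖) 1 ∂μ0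

/-- the function `ζ⁰` of assumption A(w,l)(i). -/
def zeta0 (μ0 : Measure (Rd d)) (ξ : Rd d) : ℝ :=
  ∫ y, (1 - Real.cos (2 * π * (inner ℝ ξ y : ℝ))) ∂μ0

/-- Assumption **A(w,l)** of the paper on a Lévy measure `ν` of order `α`. -/
structure AssumpA (w l : ℝ → ℝ) (α : ℝ) (ν : Measure (Rd d)) : Prop where
  levy : IsLevy ν
  order : HasOrder ν α
  scaling : ScalingPair w l
  nondeg : ∃ μ0 : Measure (Rd d), IsLevy μ0 ∧ μ0 {y : Rd d | 1 < ‖y‖} = 0 ∧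
    (∀ R > 0, μ0 ≤ nuTilde w ν R) ∧
    ((∫⁻ y, ENNReal.ofReal (‖y‖ ^ 2) ∂μ0) +
      (∫⁻ ξ, ENNReal.ofReal (‖ξ‖ ^ 4 * (1 + upsilonA α μ0 ξ) ^ (d + 3) *
        Real.exp (-(zeta0 μ0 ξ)))) < ⊤) ∧
    ∃ c0 > 0, ∀ ξ : Rd d, ‖ξ‖ = 1 →
      c0 ≤ ∫ y in {y : Rd d | ‖y‖ ≤ 1}, (inner ℝ ξ y : ℝ) ^ 2 ∂μ0
  symm : α = 1 → ∀ r R : ℝ, 0 < r → r < R →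
    (∫ y in {y : Rd d | r < ‖y‖ ∧ ‖y‖ < R}, y ∂ν) = 0
  scalable : ∃ α₁ α₂ : ℝ, α₂ ≤ α₁ ∧
    (α < 1 → α₁ ∈ Ioo (0:ℝ) 1 ∧ α₂ ∈ Ioo (0:ℝ) 1) ∧
    (1 < α → α₁ ∈ Ioc (1:ℝ) 2 ∧ α₂ ∈ Ioc (1:ℝ) 2) ∧
    (α = 1 → α₁ ∈ Ioc (1:ℝ) 2 ∧ α₂ ∈ Ico (0:ℝ) 1) ∧
    ∃ N₀ > 0, ∀ R > 0,
      (∫⁻ y in {y : Rd d | ‖y‖ ≤ 1}, ENNReal.ofReal (‖y‖ ^ α₁) ∂(nuTilde w ν R)) +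
      (∫⁻ y in {y : Rd d | 1 < ‖y‖}, ENNReal.ofReal (‖y‖ ^ α₂) ∂(nuTilde w ν R)) ≤
        ENNReal.ofReal N₀
  tailCont : ContinuousOn (fun r : ℝ => (ν {y : Rd d | r < ‖y‖}).toReal) (Ioi 0)
  tailScale : ∃ C₀ > 0, ∀ r > 0,
    (∫ s in Ioo (0:ℝ) 1,
      s * (ν {y : Rd d | r * s < ‖y‖}).toReal / (ν {y : Rd d | r < ‖y‖}).toReal) ≤ C₀

/-- `γ(t) = inf{s>0 : l(s) ≥ t}`. -/
def gammaFn (l : ℝ → ℝ) (t : ℝ) : ℝ := sInf {s : ℝ | 0 < s ∧ t ≤ l s}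

/-- Assumption **Ã(w,l,γ)** of the paper, with the constants `ε, δ, δ'` explicit. -/
structure AssumpATilde (w l : ℝ → ℝ) (α β ε δ δ' : ℝ) (ν : Measure (Rd d)) : Prop where
  base : AssumpA w l α ν
  eps_mem : ε ∈ Ioo (0:ℝ) 1
  int_l : ∀ β' ∈ Ioo (0:ℝ) (β + ε),
    (∫⁻ t in Ioo (0:ℝ) 1, ENNReal.ofReal (l t ^ β' / t)) +
    (∫⁻ t in Ioi (1:ℝ), ENNReal.ofReal (l t ^ β' / t ^ 2)) +
    (if 1 ≤ α then ∫⁻ t in Ioo (0:ℝ) 1, ENNReal.ofReal (l t ^ (1 + β') / t ^ 2) else 0) < ⊤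
  delta_mem : δ ∈ Ioo 0 (min (1/2) β)
  delta'_mem : δ' ∈ Ioo 0 (min (1/2) ε)
  gamma_low : α < 1 →
    (∫⁻ t in Ioi (1:ℝ), ENNReal.ofReal (t ^ δ / gammaFn l t)) < ⊤
  gamma_one : α = 1 →
    (∫⁻ t in Ioo (0:ℝ) 1, ENNReal.ofReal (t ^ δ / gammaFn l t)) +
    (∫⁻ t in Ioi (1:ℝ), ENNReal.ofReal (t ^ (-δ') / gammaFn l t + t ^ δ / (gammaFn l t) ^ 2)) < ⊤
  gamma_high : 1 < α →
    (∫⁻ t in Ioo (0:ℝ) 1, ENNReal.ofReal (t ^ (-δ) / gammaFn l t)) +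
    (∫⁻ t in Ioi (1:ℝ),
      ENNReal.ofReal (t ^ δ / (gammaFn l t) ^ 2 + t ^ (-(1:ℝ)/2 + δ) / gammaFn l t)) < ⊤

/-- Assumption **H(K,β)** on the kernel `ρ`. -/
def AssumpH (w : ℝ → ℝ) (α β K T : ℝ) (ν : Measure (Rd d))
    (ρ : ℝ → Rd d → Rd d → ℝ) : Prop :=
  (∀ t ∈ Icc (0:ℝ) T, ∀ x y : Rd d, |ρ t x y| ≤ K) ∧
  (∀ t ∈ Icc (0:ℝ) T, ∀ x₁ x₂ y : Rd d, |ρ t x₁ y - ρ t x₂ y| ≤ K * (w ‖x₁ - x₂‖) ^ β) ∧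
  (α = 1 → ∀ t ∈ Icc (0:ℝ) T, ∀ x : Rd d, ∀ r ∈ Ioo (0:ℝ) 1,
    (∫ y in {y : Rd d | r < ‖y‖ ∧ ‖y‖ < 1}, ρ t x y • y ∂ν) = 0)

/-- Assumption **B(K,β)** on the lower order coefficients. -/
structure AssumpB (w : ℝ → ℝ) (α β K T : ℝ) (ν₂ : Measure (Rd d))
    (b : ℝ → Rd d → Rd d) (p : ℝ → Rd d → ℝ)
    (ϱ : ℝ → Rd d → Rd d → ℝ) (q : ℝ → Rd d → Rd d → Rd d) : Prop where
  holder_coeffs : ∀ t ∈ Icc (0:ℝ) T, ∀ y : Rd d,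
    MemH w β (b t) ∧ MemH w β (p t) ∧ MemH w β (fun z => ϱ t z y) ∧
    hNorm w β (b t) + hNorm w β (p t) + hNorm w β (fun z => ϱ t z y) ≤ K
  q_ne : ∀ t ∈ Icc (0:ℝ) T, ∀ z' y : Rd d, y ≠ 0 → q t z' y ≠ 0
  q_small : Tendsto (fun ε : ℝ => ⨆ pr : Icc (0:ℝ) T × Rd d,
      ∫ y in {y : Rd d | ‖q pr.1.val pr.2 y‖ ≤ ε},
        (w ‖q pr.1.val pr.2 y‖ + (if α = 1 then ‖q pr.1.val pr.2 y‖ else 0)) ∂ν₂)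
    (𝓝[>] 0) (𝓝 0)
  q_int_low : α ≤ 1 → ∀ t ∈ Icc (0:ℝ) T, ∀ z' : Rd d,
    (∫ y, ((if α < 1 then min (w ‖q t z' y‖) 1 else 0) +
          (if α = 1 then min ‖q t z' y‖ 1 else 0)) ∂ν₂) ≤ K
  q_int_high : 1 < α → ∀ t ∈ Icc (0:ℝ) T, ∀ z' : Rd d,
    (∫ y in {y : Rd d | ‖y‖ ≤ 1}, w ‖q t z' y‖ ∂ν₂) +
    (∫ y in {y : Rd d | 1 < ‖y‖}, min ‖q t z' y‖ 1 ∂ν₂) ≤ K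
  q_holder_high : 1 < α → ∀ t ∈ Icc (0:ℝ) T, ∀ x h : Rd d,
    ((∫ y in {y : Rd d | ‖y‖ ≤ 1},
        (w ‖q t (x + h) y‖) ^ β * ‖q t (x + h) y - q t x y‖ ∂ν₂) ≤ K * (w ‖h‖) ^ β) ∧
    ((∫ y in {y : Rd d | ‖y‖ ≤ 1},
        (w ‖q t (x + h) y - q t x y‖) ^ β * ‖q t x y‖ ∂ν₂) ≤ K * (w ‖h‖) ^ β) ∧
    ((∫ y in {y : Rd d | 1 < ‖y‖}, min ‖q t (x + h) y - q t x y‖ 1 ∂ν₂) ≤ K * (w ‖h‖) ^ β)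
  q_holder_low : α < 1 → ∀ t ∈ Icc (0:ℝ) T, ∀ z' h : Rd d,
    (∫ y, min (w ‖q t (z' + h) y - q t z' y‖) 1 ∂ν₂) ≤ K * (w ‖h‖) ^ β
  q_holder_one : α = 1 → ∀ t ∈ Icc (0:ℝ) T, ∀ z' h : Rd d,
    (∫ y, min ‖q t (z' + h) y - q t z' y‖ 1 ∂ν₂) ≤ K * (w ‖h‖) ^ β

/-- the compensated increment `∇^α u(x;y)`. -/
def nablaA (α : ℝ) (u : Rd d → ℝ) (x y : Rd d) : ℝ :=
  u (x + y) - u x - chiA α y * fderiv ℝ u x y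

/-- the operator `𝒜` with space dependent kernel. -/
def Aop (ν : Measure (Rd d)) (α : ℝ) (ρ : ℝ → Rd d → Rd d → ℝ)
    (u : ℝ → Rd d → ℝ) (t : ℝ) (x : Rd d) : ℝ :=
  ∫ y, nablaA α (u t) x y * ρ t x y ∂ν

/-- the frozen operator `L_{t,z}`. -/
def Ltz (ν : Measure (Rd d)) (α : ℝ) (ρ : ℝ → Rd d → Rd d → ℝ)
    (t : ℝ) (z : Rd d) (u : Rd d → ℝ) (x : Rd d) : ℝ :=
  ∫ y, nablaA α u x y * ρ t z y ∂ν

/-- the operator `𝒢` with space dependent coefficient `G`. -/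
def Gop (ν : Measure (Rd d)) (α : ℝ) (G : Rd d → Rd d →L[ℝ] Rd d)
    (u : Rd d → ℝ) (x : Rd d) : ℝ :=
  ∫ y, (u (x + G x y) - u x - chiA α y * fderiv ℝ u x (G x y)) ∂ν

/-- the frozen operator `L_z` (coefficient case). -/
def LzG (ν : Measure (Rd d)) (α : ℝ) (G : Rd d → Rd d →L[ℝ] Rd d)
    (z : Rd d) (u : Rd d → ℝ) (x : Rd d) : ℝ :=
  ∫ y, (u (x + G z y) - u x - chiA α y * fderiv ℝ u x (G z y)) ∂ν

/-- the lower order operator `Q`. -/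
def Qop (ν₂ : Measure (Rd d)) (α : ℝ) (b : ℝ → Rd d → Rd d) (p : ℝ → Rd d → ℝ)
    (ϱ : ℝ → Rd d → Rd d → ℝ) (q : ℝ → Rd d → Rd d → Rd d)
    (u : ℝ → Rd d → ℝ) (t : ℝ) (x : Rd d) : ℝ :=
  (if 1 < α then fderiv ℝ (u t) x (b t x) else 0) + p t x * u t x +
  ∫ y, ((u t (x + q t x y) - u t x -
      (if 1 < α ∧ ‖y‖ ≤ 1 then fderiv ℝ (u t) x (q t x y) else 0)) * ϱ t x y) ∂ν₂

/-- the operator `Q̃_{t,z,z'}`. -/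
def Qtilde (ν₂ : Measure (Rd d)) (α : ℝ) (ϱ : ℝ → Rd d → Rd d → ℝ)
    (q : ℝ → Rd d → Rd d → Rd d) (t : ℝ) (z z' : Rd d)
    (u : ℝ → Rd d → ℝ) (x : Rd d) : ℝ :=
  ∫ y, ((u t (x + q t z' y) - u t x -
      (if 1 < α ∧ ‖y‖ ≤ 1 then fderiv ℝ (u t) x (q t z' y) else 0)) * ϱ t z y) ∂ν₂

/-- `u` solves the Cauchy problem `∂_t u = ℒu - λu + f`, `u(0,·)=0`, on `H_T`,
in the integral sense; `Lu` is the function `(t,x) ↦ ℒu(t,x)`. -/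
def SolvesCauchy (T lam : ℝ) (Lu : ℝ → Rd d → ℝ) (f u : ℝ → Rd d → ℝ) : Prop :=
  ∀ t ∈ Icc (0:ℝ) T, ∀ x : Rd d,
    u t x = ∫ s in (0:ℝ)..t, (Lu s x - lam * u s x + f s x)

/-- `λ⁻¹ ∧ T` (with the convention `0⁻¹ = ∞`). -/
def lamT (lam T : ℝ) : ℝ := if lam = 0 then T else min lam⁻¹ T

/-- `η` is an admissible cutoff function. -/
def IsCutoff (η : Rd d → ℝ) : Prop :=
  ContDiff ℝ (⊤ : ℕ∞) η ∧ HasCompactSupport η ∧ (∀ x, 0 ≤ η x ∧ η x ≤ 1) ∧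
  (∀ x : Rd d, ‖x‖ ≤ 1 → η x = 1) ∧ (∀ x : Rd d, 2 < ‖x‖ → η x = 0)

/-- `η_{m,z}(x) = η(m(x-z))`. -/
def etaCut (η : Rd d → ℝ) (m : ℝ) (z x : Rd d) : ℝ := η (m • (x - z))

/-- `Ḡ_{z,z'} = ‖G(z)-G(z')‖`. -/
def opDist (G : Rd d → Rd d →L[ℝ] Rd d) (z z' : Rd d) : ℝ := ‖G z - G z'‖

/-- the modulus `g(z,z')` of assumption G(c₀,K,β). -/
def gFun (w : ℝ → ℝ) (α δ' : ℝ) (G : Rd d → Rd d →L[ℝ] Rd d) (z z' : Rd d) : ℝ :=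
  if α < 1 then (w (opDist G z z')⁻¹)⁻¹
  else if α = 1 then
    max ((w (opDist G z z')⁻¹)⁻¹ * (w (opDist G z z')) ^ (-δ')) (opDist G z z')
  else opDist G z z'

/-- Assumption **G(c₀,K,β)** on the coefficient `G`. -/
structure AssumpG (w : ℝ → ℝ) (α β δ' c₀ K : ℝ) (G : Rd d → Rd d →L[ℝ] Rd d) : Prop where
  invertible : ∀ z, ∃ Gi : Rd d →L[ℝ] Rd d,
    (G z).comp Gi = ContinuousLinearMap.id ℝ (Rd d) ∧
    Gi.comp (G z) = ContinuousLinearMap.id ℝ (Rd d)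
  unifCont : UniformContinuous G
  inj : Function.Injective G
  detLB : ∀ z, c₀ ≤ |LinearMap.det ((G z).toLinearMap)|
  normUB : ∀ z, ‖G z‖ ≤ K
  gHolder : ∀ z z', z ≠ z' → gFun w α δ' G z z' ≤ K * (w ‖z - z'‖) ^ β

/-- `f ∈ C_b²(ℝ^d)`. -/
def CB2 (f : Rd d → ℝ) : Prop :=
  ContDiff ℝ 2 f ∧ ∀ i : ℕ, i ≤ 2 → BddAbove (range fun x => ‖iteratedFDeriv ℝ i f x‖)

end
private lemma tailSet_meas (d : ℕ) (ρ : ℝ) : MeasurableSet {y : Rd d | ρ < ‖y‖} :=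
  (isOpen_lt continuous_const continuous_norm).measurableSet

private lemma nuTilde_tail (d : ℕ) (w : ℝ → ℝ) (ν : Measure (Rd d)) {R ρ : ℝ} (hR : 0 < R) :
    nuTilde w ν R {y : Rd d | ρ < ‖y‖}
      = ENNReal.ofReal (w R) * ν {y : Rd d | ρ * R < ‖y‖} := by
  rw [nuTilde, Measure.smul_apply, smul_eq_mul, nuScaled,
    Measure.map_apply ((continuous_const_smul (R⁻¹:ℝ)).measurable) (tailSet_meas d ρ)]
  congr 1
  congr 1
  ext y
  simp only [Set.mem_preimage, Set.mem_setOf_eq, norm_smul, Real.norm_eq_abs,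
    abs_of_pos (inv_pos.mpr hR)]
  rw [inv_mul_eq_div, lt_div_iff₀ hR]

/-- Lemma ess (a): the tail `ς(r)=ν(|y|>r)` is comparable to `w(r)⁻¹`. -/
theorem tail_comparable_scaling (d : ℕ) (hd : 1 ≤ d) (w l : ℝ → ℝ) (α : ℝ)
    (ν : Measure (Rd d)) (hA : AssumpA w l α ν) :
    ∃ C₁ > 0, ∃ C₂ > 0, ∀ r > 0,
      C₁ * (ν {y : Rd d | r < ‖y‖}).toReal ≤ (w r)⁻¹ ∧
      (w r)⁻¹ ≤ C₂ * (ν {y : Rd d | r < ‖y‖}).toReal := by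
  classical
  obtain ⟨α₁, α₂, h12, hlt, hgt, heq, N₀, hN₀, hsc⟩ := hA.scalable
  have hα₂ : 0 ≤ α₂ := by
    rcases lt_trichotomy α 1 with h | h | h
    · exact (hlt h).2.1.le
    · exact (heq h).2.1
    · linarith [(hgt h).2.1]
  have hwpos : ∀ r > 0, 0 < w r := hA.scaling.w_pos
  -- upper bound:  w r * ν{r<‖y‖} ≤ N₀
  have hupper : ∀ r > 0,
      ENNReal.ofReal (w r) * ν {y : Rd d | r < ‖y‖} ≤ ENNReal.ofReal N₀ := by
    intro r hr
    have h1 : (∫⁻ y in {y : Rd d | 1 < ‖y‖}, ENNReal.ofReal (‖y‖ ^ α₂) ∂(nuTilde w ν r))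
        ≤ ENNReal.ofReal N₀ := le_trans le_add_self (hsc r hr)
    have h2 : nuTilde w ν r {y : Rd d | 1 < ‖y‖}
        ≤ ∫⁻ y in {y : Rd d | 1 < ‖y‖}, ENNReal.ofReal (‖y‖ ^ α₂) ∂(nuTilde w ν r) := by
      rw [← setLIntegral_one]
      refine setLIntegral_mono (by fun_prop) ?_
      intro y hy
      exact ENNReal.one_le_ofReal.mpr (Real.one_le_rpow (le_of_lt hy) hα₂)
    have h3 := le_trans h2 h1
    rwa [nuTilde_tail d w ν hr, one_mul] at h3
  have hfin : ∀ r > 0, ν {y : Rd d | r < ‖y‖} ≠ ⊤ := by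
    intro r hr hinf
    have h := hupper r hr
    rw [hinf, ENNReal.mul_top (by simp [ENNReal.ofReal_eq_zero, not_le, hwpos r hr])] at h
    exact ENNReal.ofReal_ne_top (top_le_iff.mp h)
  have hreal : ∀ r > 0, w r * (ν {y : Rd d | r < ‖y‖}).toReal ≤ N₀ := by
    intro r hr
    have h := ENNReal.toReal_mono ENNReal.ofReal_ne_top (hupper r hr)
    rwa [ENNReal.toReal_mul, ENNReal.toReal_ofReal (hwpos r hr).le,
      ENNReal.toReal_ofReal hN₀.le] at h
  -- lower bound preparation
  obtain ⟨μ0, hμL, hμsupp, hμle, hμint, c0, hc0, hc0ξ⟩ := hA.nondeg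
  have hμ2 : (∫⁻ y, ENNReal.ofReal (‖y‖ ^ 2) ∂μ0) < ⊤ := (ENNReal.add_lt_top.mp hμint).1
  set g2 : Rd d → ℝ≥0∞ := fun y => ENNReal.ofReal (‖y‖ ^ 2) with hg2
  set μ' := μ0.withDensity g2 with hμ'
  have hμ'apply : ∀ s : Set (Rd d), MeasurableSet s → μ' s = ∫⁻ y in s, g2 y ∂μ0 := by
    intro s hs
    rw [hμ', withDensity_apply _ hs]
  have hμ'univ : μ' Set.univ < ⊤ := by
    rw [hμ'apply _ MeasurableSet.univ, Measure.restrict_univ]; exact hμ2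
  set s : ℕ → Set (Rd d) := fun n => {y : Rd d | ‖y‖ ≤ ((n : ℝ) + 1)⁻¹} with hsdef
  have hsm : ∀ n, MeasurableSet (s n) := fun n =>
    (isClosed_le continuous_norm continuous_const).measurableSet
  have hanti : Antitone s := by
    intro m n hmn y hy
    simp only [hsdef, Set.mem_setOf_eq] at hy ⊢
    refine hy.trans (inv_anti₀ (by positivity) (by exact_mod_cast Nat.add_le_add_right hmn 1))
  have hiInter : (⋂ n : ℕ, s n) = {(0 : Rd d)} := by
    ext y
    simp only [hsdef, Set.mem_iInter, Set.mem_setOf_eq, Set.mem_singleton_iff]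
    constructor
    · intro h
      by_contra hy0
      have hpos : 0 < ‖y‖ := norm_pos_iff.mpr hy0
      obtain ⟨n, hn⟩ := exists_nat_gt ‖y‖⁻¹
      have h1 : ((n : ℝ) + 1)⁻¹ < ‖y‖ := by
        rw [inv_lt_comm₀ (by positivity) hpos]
        calc ‖y‖⁻¹ < n := hn
          _ ≤ (n : ℝ) + 1 := by linarith
      exact absurd (h n) (not_le.mpr h1)
    · rintro rfl n
      simp only [norm_zero]
      positivity
  have hμ'zero : μ' {(0 : Rd d)} = 0 := by
    rw [hμ'apply _ (measurableSet_singleton 0), lintegral_singleton]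
    simp [hg2]
  have htend : Tendsto (fun n : ℕ => μ' (s n)) atTop (𝓝 0) := by
    have h := tendsto_measure_iInter_atTop (μ := μ') (s := s)
      (fun n => (hsm n).nullMeasurableSet) hanti
      ⟨0, ne_of_lt (lt_of_le_of_lt (measure_mono (Set.subset_univ _)) hμ'univ)⟩
    rwa [hiInter, hμ'zero] at h
  obtain ⟨n, hn⟩ := (htend.eventually_lt_const
    (show (0 : ℝ≥0∞) < ENNReal.ofReal (c0 / 2) from ENNReal.ofReal_pos.mpr (by linarith))).exists
  set ε : ℝ := ((n : ℝ) + 1)⁻¹ with hεdef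
  have hε : 0 < ε := by positivity
  -- unit vector
  have hd0 : 0 < d := hd
  set ξ : Rd d := EuclideanSpace.single (⟨0, hd0⟩ : Fin d) (1 : ℝ) with hξdef
  have hξ : ‖ξ‖ = 1 := by
    rw [hξdef, EuclideanSpace.norm_single]
    norm_num
  have hinner : ∀ y : Rd d, (inner ℝ ξ y : ℝ) ^ 2 ≤ ‖y‖ ^ 2 := by
    intro y
    have h := abs_real_inner_le_norm ξ y
    rw [hξ, one_mul] at h
    nlinarith [abs_nonneg (inner ℝ ξ y : ℝ), sq_abs (inner ℝ ξ y : ℝ), norm_nonneg y]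
  -- tail lower bound for μ0
  have htail0 : ENNReal.ofReal (c0 / 2) ≤ μ0 {y : Rd d | ε < ‖y‖} := by
    set S1 := {y : Rd d | ‖y‖ ≤ 1} with hS1def
    have hS1m : MeasurableSet S1 := (isClosed_le continuous_norm continuous_const).measurableSet
    have hint1 : c0 ≤ ∫ y in S1, (inner ℝ ξ y : ℝ) ^ 2 ∂μ0 := hc0ξ ξ hξ
    set L := ∫⁻ y in S1, ENNReal.ofReal ((inner ℝ ξ y : ℝ) ^ 2) ∂μ0 with hLdef
    have heqL : ∫ y in S1, (inner ℝ ξ y : ℝ) ^ 2 ∂μ0 = L.toReal := by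
      have hmeas : AEStronglyMeasurable (fun y : Rd d => (inner ℝ ξ y : ℝ) ^ 2)
          (μ0.restrict S1) :=
        ((continuous_const.inner continuous_id').pow 2).aestronglyMeasurable
      rw [hLdef, integral_eq_lintegral_of_nonneg_ae
        (Filter.Eventually.of_forall fun y => sq_nonneg _) hmeas]
    have hcL : ENNReal.ofReal c0 ≤ L :=
      ENNReal.ofReal_le_of_le_toReal (heqL ▸ hint1)
    set B := {y : Rd d | ε < ‖y‖ ∧ ‖y‖ ≤ 1} with hBdef
    have hBm : MeasurableSet B :=
      ((isOpen_lt continuous_const continuous_norm).measurableSet).inter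
        (isClosed_le continuous_norm continuous_const).measurableSet
    have hsub : S1 ⊆ s n ∪ B := by
      intro y hy
      by_cases h : ‖y‖ ≤ ε
      · exact Or.inl h
      · exact Or.inr ⟨lt_of_not_ge h, hy⟩
    have hdisj : Disjoint (s n) B := by
      rw [Set.disjoint_left]
      rintro y hy ⟨h1, _⟩
      exact absurd hy (not_le.mpr h1)
    have hLsplit : L ≤ μ' (s n) + μ0 {y : Rd d | ε < ‖y‖} := by
      calc L ≤ ∫⁻ y in s n ∪ B, ENNReal.ofReal ((inner ℝ ξ y : ℝ) ^ 2) ∂μ0 :=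
            lintegral_mono_set hsub
        _ = (∫⁻ y in s n, ENNReal.ofReal ((inner ℝ ξ y : ℝ) ^ 2) ∂μ0)
            + ∫⁻ y in B, ENNReal.ofReal ((inner ℝ ξ y : ℝ) ^ 2) ∂μ0 :=
            lintegral_union hBm hdisj
        _ ≤ μ' (s n) + μ0 {y : Rd d | ε < ‖y‖} := by
            refine add_le_add ?_ ?_
            · rw [hμ'apply _ (hsm n)]
              exact setLIntegral_mono' (hsm n)
                (fun y _ => ENNReal.ofReal_le_ofReal (hinner y))
            · calc (∫⁻ y in B, ENNReal.ofReal ((inner ℝ ξ y : ℝ) ^ 2) ∂μ0)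
                  ≤ ∫⁻ _ in B, 1 ∂μ0 := by
                    refine setLIntegral_mono' hBm fun y hy => ?_
                    refine ENNReal.ofReal_le_one.mpr ?_
                    have h1 : (inner ℝ ξ y : ℝ) ^ 2 ≤ ‖y‖ ^ 2 := hinner y
                    have h2 : ‖y‖ ≤ 1 := hy.2
                    nlinarith [norm_nonneg y]
                _ = μ0 B := setLIntegral_one _
                _ ≤ μ0 {y : Rd d | ε < ‖y‖} := measure_mono fun y hy => hy.1
    have hkey : ENNReal.ofReal c0 ≤ ENNReal.ofReal (c0 / 2) + μ0 {y : Rd d | ε < ‖y‖} :=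
      hcL.trans (hLsplit.trans (add_le_add hn.le le_rfl))
    have hc0' : ENNReal.ofReal c0 = ENNReal.ofReal (c0 / 2) + ENNReal.ofReal (c0 / 2) := by
      rw [← ENNReal.ofReal_add (by linarith) (by linarith)]
      norm_num
    rw [hc0', ENNReal.add_le_add_iff_left ENNReal.ofReal_ne_top] at hkey
    exact hkey
  have hlpos : 0 < l ε⁻¹ := hA.scaling.l_pos ε⁻¹ (inv_pos.mpr hε)
  refine ⟨N₀⁻¹, inv_pos.mpr hN₀, 2 * l ε⁻¹ / c0, by positivity, ?_⟩
  intro r hr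
  set ς := (ν {y : Rd d | r < ‖y‖}).toReal with hςdef
  have hςnn : 0 ≤ ς := ENNReal.toReal_nonneg
  have hw : 0 < w r := hwpos r hr
  have h1 : w r * ς ≤ N₀ := hreal r hr
  have hR : 0 < ε⁻¹ * r := by positivity
  have h2' : ENNReal.ofReal (c0 / 2)
      ≤ ENNReal.ofReal (w (ε⁻¹ * r)) * ν {y : Rd d | r < ‖y‖} := by
    refine htail0.trans ?_
    have h := Measure.le_iff'.mp (hμle (ε⁻¹ * r) hR) {y : Rd d | ε < ‖y‖}
    rw [nuTilde_tail d w ν hR] at h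
    have hεR : ε * (ε⁻¹ * r) = r := by field_simp
    rwa [hεR] at h
  have h2 : c0 / 2 ≤ w (ε⁻¹ * r) * ς := by
    have hb : ENNReal.ofReal (w (ε⁻¹ * r)) * ν {y : Rd d | r < ‖y‖} ≠ ⊤ :=
      ENNReal.mul_ne_top ENNReal.ofReal_ne_top (hfin r hr)
    have h := ENNReal.toReal_mono hb h2'
    rwa [ENNReal.toReal_ofReal (by linarith), ENNReal.toReal_mul,
      ENNReal.toReal_ofReal (hwpos _ hR).le] at h
  have h3 : c0 / 2 ≤ l ε⁻¹ * w r * ς :=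
    h2.trans (mul_le_mul_of_nonneg_right (hA.scaling.scale ε⁻¹ (inv_pos.mpr hε) r hr) hςnn)
  constructor
  · rw [show (w r)⁻¹ = 1 / w r from inv_eq_one_div _, le_div_iff₀ hw]
    have heq1 : N₀⁻¹ * ς * w r = w r * ς * N₀⁻¹ := by ring
    rw [heq1]
    calc w r * ς * N₀⁻¹ ≤ N₀ * N₀⁻¹ :=
          mul_le_mul_of_nonneg_right h1 (inv_nonneg.mpr hN₀.le)
      _ = 1 := mul_inv_cancel₀ (ne_of_gt hN₀)
  · rw [show (w r)⁻¹ = 1 / w r from inv_eq_one_div _, div_le_iff₀ hw]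
    have heq2 : 2 * l ε⁻¹ / c0 * ς * w r = 2 * (l ε⁻¹ * w r * ς) / c0 := by ring
    rw [heq2, le_div_iff₀ hc0]
    linarith
end

section
/- Let ν be a Lévy measure on ℝ^d∖{0} satisfying A(w,l) with scaling function w and scaling factor l. Then: (b) ∫_{|y|≤1} w(|y|) ν(dy) = +∞; (c) for every ε>0, ∫_{|y|≤1} w(|y|)^{1+ε} ν(dy) < ∞; and (d) for every ε>0, ∫_{|y|≤1} |y|^ε w(|y|) ν(dy) < ∞. -/
open MeasureTheory Real Set Filter
open scoped ENNReal RealInnerProductSpace Topology Classical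

section helpers
variable {d : ℕ}

private lemma preim_ball' {R : ℝ} (hR : 0 < R) :
    (fun y : Rd d => R⁻¹ • y) ⁻¹' {z : Rd d | ‖z‖ ≤ 1} = {y : Rd d | ‖y‖ ≤ R} := by
  ext y
  simp only [mem_preimage, mem_setOf_eq, norm_smul, norm_inv, Real.norm_eq_abs,
    abs_of_pos hR]
  rw [← div_eq_inv_mul, div_le_one hR]

private lemma meas_ball' : MeasurableSet {y : Rd d | ‖y‖ ≤ (1:ℝ)} :=
  measurableSet_le measurable_norm measurable_const

private lemma smul_meas' {R : ℝ} : Measurable (fun y : Rd d => R⁻¹ • y) :=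
  (continuous_const_smul _).measurable

/-- upper bound via `lintegral_map_le`, valid for arbitrary `f`. -/
private lemma lintegral_nuTilde_le (w : ℝ → ℝ) (ν : Measure (Rd d)) {R : ℝ} (hR : 0 < R)
    (f : Rd d → ℝ≥0∞) :
    (∫⁻ z in {z : Rd d | ‖z‖ ≤ 1}, f z ∂(nuTilde w ν R)) ≤
      ENNReal.ofReal (w R) * ∫⁻ y in {y : Rd d | ‖y‖ ≤ R}, f (R⁻¹ • y) ∂ν := by
  unfold nuTilde nuScaled
  rw [Measure.restrict_smul, lintegral_smul_measure,
    Measure.restrict_map smul_meas' meas_ball', preim_ball' hR]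
  exact mul_le_mul_right (lintegral_map_le f (fun y : Rd d => R⁻¹ • y)) _

/-- equality version for measurable `f`. -/
private lemma lintegral_nuTilde_eq (w : ℝ → ℝ) (ν : Measure (Rd d)) {R : ℝ} (hR : 0 < R)
    {f : Rd d → ℝ≥0∞} (hf : Measurable f) :
    (∫⁻ z in {z : Rd d | ‖z‖ ≤ 1}, f z ∂(nuTilde w ν R)) =
      ENNReal.ofReal (w R) * ∫⁻ y in {y : Rd d | ‖y‖ ≤ R}, f (R⁻¹ • y) ∂ν := by
  unfold nuTilde nuScaled
  rw [Measure.restrict_smul, lintegral_smul_measure,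
    Measure.restrict_map smul_meas' meas_ball', preim_ball' hR,
    lintegral_map hf smul_meas', smul_eq_mul]

private lemma meas_shell' (a b : ℝ) : MeasurableSet {y : Rd d | a < ‖y‖ ∧ ‖y‖ ≤ b} :=
  (measurableSet_lt measurable_const measurable_norm).inter
    (measurableSet_le measurable_norm measurable_const)

/-- shell measure bound from A(iii). -/
private lemma shell_bound {w : ℝ → ℝ} {ν : Measure (Rd d)} {α₁ N₀ : ℝ} (hα₁ : 0 < α₁)
    (hint : ∀ R > 0, (∫⁻ y in {y : Rd d | ‖y‖ ≤ 1},
        ENNReal.ofReal (‖y‖ ^ α₁) ∂(nuTilde w ν R)) ≤ ENNReal.ofReal N₀)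
    {e : ℝ} (he0 : 0 < e) {R : ℝ} (hR : 0 < R) (hw : 0 < w R) :
    ν {y : Rd d | e * R < ‖y‖ ∧ ‖y‖ ≤ R} ≤ ENNReal.ofReal (N₀ / (w R * e ^ α₁)) := by
  have hfmeas : Measurable fun y : Rd d => ENNReal.ofReal (‖y‖ ^ α₁) :=
    (measurable_norm.pow_const α₁).ennreal_ofReal
  have heq := lintegral_nuTilde_eq w ν hR hfmeas
  have hle := hint R hR
  rw [heq] at hle
  have hS : {y : Rd d | e * R < ‖y‖ ∧ ‖y‖ ≤ R} ⊆ {y : Rd d | ‖y‖ ≤ R} := fun y hy => hy.2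
  have hpt : ∀ y ∈ {y : Rd d | e * R < ‖y‖ ∧ ‖y‖ ≤ R},
      ENNReal.ofReal (e ^ α₁) ≤ ENNReal.ofReal (‖R⁻¹ • y‖ ^ α₁) := by
    intro y hy
    apply ENNReal.ofReal_le_ofReal
    apply Real.rpow_le_rpow he0.le _ hα₁.le
    have : ‖R⁻¹ • y‖ = ‖y‖ / R := by
      rw [norm_smul, norm_inv, Real.norm_eq_abs, abs_of_pos hR, ← div_eq_inv_mul]
    rw [this, le_div_iff₀ hR]
    exact hy.1.le
  have h1 : ENNReal.ofReal (e ^ α₁) * ν {y : Rd d | e * R < ‖y‖ ∧ ‖y‖ ≤ R} ≤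
      ∫⁻ y in {y : Rd d | ‖y‖ ≤ R}, ENNReal.ofReal (‖R⁻¹ • y‖ ^ α₁) ∂ν := by
    rw [← setLIntegral_const]
    exact (setLIntegral_mono' (meas_shell' _ _) hpt).trans (lintegral_mono_set hS)
  have h2 : ENNReal.ofReal (w R) * (ENNReal.ofReal (e ^ α₁) *
      ν {y : Rd d | e * R < ‖y‖ ∧ ‖y‖ ≤ R}) ≤ ENNReal.ofReal N₀ :=
    (mul_le_mul_right h1 _).trans hle
  have hwE : (0:ℝ) < w R * e ^ α₁ := mul_pos hw (Real.rpow_pos_of_pos he0 _)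
  rw [← mul_assoc, ← ENNReal.ofReal_mul hw.le] at h2
  rw [ENNReal.ofReal_div_of_pos hwE]
  rw [ENNReal.le_div_iff_mul_le (Or.inl (by simp [ENNReal.ofReal_eq_zero, not_le, hwE]))
    (Or.inl ENNReal.ofReal_ne_top)]
  rwa [mul_comm]

/-- covering of the punctured ball by shells. -/
private lemma lintegral_ball_le_tsum (ν : Measure (Rd d)) (hν0 : ν {0} = 0)
    (f : Rd d → ℝ≥0∞) {e : ℝ} (he1 : e < 1) :
    (∫⁻ y in {y : Rd d | ‖y‖ ≤ 1}, f y ∂ν) ≤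
      ∑' k : ℕ, ∫⁻ y in {y : Rd d | e * e ^ k < ‖y‖ ∧ ‖y‖ ≤ e ^ k}, f y ∂ν := by
  have hcover : {y : Rd d | ‖y‖ ≤ 1} ⊆
      {(0:Rd d)} ∪ ⋃ k : ℕ, {y : Rd d | e * e ^ k < ‖y‖ ∧ ‖y‖ ≤ e ^ k} := by
    intro y hy
    rcases eq_or_ne y 0 with h0 | h0
    · exact Or.inl (by simp [h0])
    · right
      have hny : 0 < ‖y‖ := norm_pos_iff.2 h0
      have hex : ∃ n : ℕ, e ^ n < ‖y‖ := exists_pow_lt_of_lt_one hny he1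
      classical
      set n := Nat.find hex with hn
      have hspec : e ^ n < ‖y‖ := Nat.find_spec hex
      have hn0 : n ≠ 0 := by
        intro h
        rw [h, pow_zero] at hspec
        exact absurd hy (not_le.2 hspec)
      obtain ⟨m, hm⟩ := Nat.exists_eq_succ_of_ne_zero hn0
      refine mem_iUnion.2 ⟨m, ?_, ?_⟩
      · have : e ^ n = e * e ^ m := by rw [hm, pow_succ, mul_comm]
        rw [← this]; exact hspec
      · have := Nat.find_min hex (by omega : m < n)
        exact not_lt.1 this
  calc (∫⁻ y in {y : Rd d | ‖y‖ ≤ 1}, f y ∂ν)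
      ≤ ∫⁻ y in {(0:Rd d)} ∪ ⋃ k : ℕ, {y : Rd d | e * e ^ k < ‖y‖ ∧ ‖y‖ ≤ e ^ k}, f y ∂ν :=
        lintegral_mono_set hcover
    _ ≤ (∫⁻ y in {(0:Rd d)}, f y ∂ν) +
        ∫⁻ y in ⋃ k : ℕ, {y : Rd d | e * e ^ k < ‖y‖ ∧ ‖y‖ ≤ e ^ k}, f y ∂ν :=
        lintegral_union_le _ _ _
    _ ≤ 0 + ∑' k : ℕ, ∫⁻ y in {y : Rd d | e * e ^ k < ‖y‖ ∧ ‖y‖ ≤ e ^ k}, f y ∂ν := by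
        refine add_le_add ?_ (lintegral_iUnion_le _ _)
        rw [Measure.restrict_eq_zero.2 hν0]
        simp
    _ = _ := by rw [zero_add]

private lemma geom_tsum_lt_top {C q : ℝ} (hq0 : 0 ≤ q) (hq1 : q < 1) :
    (∑' k : ℕ, ENNReal.ofReal (C * q ^ k)) < ⊤ := by
  have h1 : ∀ k : ℕ, ENNReal.ofReal (C * q ^ k) ≤
      ENNReal.ofReal C * (ENNReal.ofReal q) ^ k := by
    intro k
    rcases le_or_gt C 0 with hC | hC
    · simp [ENNReal.ofReal_eq_zero.2 (mul_nonpos_of_nonpos_of_nonneg hC (pow_nonneg hq0 k))]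
    · rw [ENNReal.ofReal_mul hC.le, ENNReal.ofReal_pow hq0]
  calc (∑' k : ℕ, ENNReal.ofReal (C * q ^ k))
      ≤ ∑' k : ℕ, ENNReal.ofReal C * (ENNReal.ofReal q) ^ k := ENNReal.tsum_le_tsum h1
    _ = ENNReal.ofReal C * ∑' k : ℕ, (ENNReal.ofReal q) ^ k := ENNReal.tsum_mul_left
    _ < ⊤ := by
        rw [ENNReal.tsum_geometric]
        exact ENNReal.mul_lt_top ENNReal.ofReal_lt_top
          (ENNReal.inv_lt_top.2 (tsub_pos_of_lt (ENNReal.ofReal_lt_one.2 hq1)))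

private lemma rpow_pow_comm {x : ℝ} (hx : 0 ≤ x) (ε : ℝ) (k : ℕ) :
    (x ^ k) ^ ε = (x ^ ε) ^ k := by
  rw [← Real.rpow_natCast x k, ← Real.rpow_mul hx, mul_comm ((k:ℝ)) ε,
    Real.rpow_mul hx, Real.rpow_natCast]

end helpers

/-- Lemma ess (b),(c),(d): integrability properties of `w(|y|)` near the origin. -/
theorem scaling_integrability (d : ℕ) (hd : 1 ≤ d) (w l : ℝ → ℝ) (α : ℝ)
    (ν : Measure (Rd d)) (hA : AssumpA w l α ν) :
    ((∫⁻ y in {y : Rd d | ‖y‖ ≤ 1}, ENNReal.ofReal (w ‖y‖) ∂ν) = ⊤) ∧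
    (∀ ε > 0, (∫⁻ y in {y : Rd d | ‖y‖ ≤ 1}, ENNReal.ofReal ((w ‖y‖) ^ (1 + ε)) ∂ν) < ⊤) ∧
    (∀ ε > 0, (∫⁻ y in {y : Rd d | ‖y‖ ≤ 1}, ENNReal.ofReal (‖y‖ ^ ε * w ‖y‖) ∂ν) < ⊤) := by
  classical
  obtain ⟨hν0, -⟩ := hA.levy
  have sp := hA.scaling
  -- choose `e ∈ (0,1)` with `l e ≤ 1/2`
  obtain ⟨e, hel, he0, he1⟩ : ∃ e : ℝ, l e < 1/2 ∧ 0 < e ∧ e < 1 := by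
    have h1 : ∀ᶠ t in 𝓝[>] (0:ℝ), l t < 1/2 :=
      sp.l_zero.eventually (gt_mem_nhds (by norm_num : (0:ℝ) < 1/2))
    have h2 : ∀ᶠ t in 𝓝[>] (0:ℝ), t ∈ Ioo (0:ℝ) 1 :=
      eventually_of_mem (Ioo_mem_nhdsGT_of_mem ⟨le_refl 0, one_pos⟩) fun x hx => hx
    obtain ⟨e, hea, heb⟩ := (h1.and h2).exists
    exact ⟨e, hea, heb.1, heb.2⟩
  have hwk : ∀ k : ℕ, 0 < w (e ^ k) := fun k => sp.w_pos _ (pow_pos he0 k)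
  have hwk2 : ∀ k : ℕ, w (e ^ k) ≤ (1/2) ^ k := by
    intro k
    induction k with
    | zero => simp [sp.w_one]
    | succ k ih =>
      have h1 : w (e ^ (k+1)) ≤ l e * w (e ^ k) := by
        have := sp.scale e he0 (e ^ k) (pow_pos he0 k)
        rw [pow_succ, mul_comm (e ^ k) e]
        exact this
      calc w (e ^ (k+1)) ≤ l e * w (e ^ k) := h1
        _ ≤ (1/2) * (1/2) ^ k :=
          mul_le_mul hel.le ih (hwk k).le (by norm_num)
        _ = (1/2) ^ (k+1) := by rw [pow_succ, mul_comm]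
  set L := l 1 with hLdef
  have hL : 0 < L := sp.l_pos 1 one_pos
  have hwle : ∀ k : ℕ, ∀ y : Rd d, 0 < ‖y‖ → ‖y‖ ≤ e ^ k → w ‖y‖ ≤ L * w (e ^ k) := by
    intro k y hy0 hyk
    have hek : (0:ℝ) < e ^ k := pow_pos he0 k
    have ht0 : 0 < ‖y‖ / e ^ k := div_pos hy0 hek
    have ht1 : ‖y‖ / e ^ k ≤ 1 := (div_le_one hek).2 hyk
    have h1 : w (‖y‖ / e ^ k * e ^ k) ≤ l (‖y‖ / e ^ k) * w (e ^ k) :=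
      sp.scale _ ht0 _ hek
    rw [div_mul_cancel₀ _ hek.ne'] at h1
    refine h1.trans (mul_le_mul_of_nonneg_right ?_ (hwk k).le)
    exact sp.l_mono (mem_Ioi.2 ht0) (mem_Ioi.2 one_pos) ht1
  -- A(iii) data
  obtain ⟨α₁, α₂, -, hc1, hc2, hc3, N₀, hN₀, hRint⟩ := hA.scalable
  have hα₁ : 0 < α₁ := by
    rcases lt_trichotomy α 1 with h | h | h
    · exact (hc1 h).1.1
    · exact lt_trans one_pos (hc3 h).1.1
    · exact lt_trans one_pos (hc2 h).1.1
  have hint : ∀ R > 0, (∫⁻ y in {y : Rd d | ‖y‖ ≤ 1},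
      ENNReal.ofReal (‖y‖ ^ α₁) ∂(nuTilde w ν R)) ≤ ENNReal.ofReal N₀ :=
    fun R hR => le_self_add.trans (hRint R hR)
  have hshell : ∀ k : ℕ, ν {y : Rd d | e * e ^ k < ‖y‖ ∧ ‖y‖ ≤ e ^ k} ≤
      ENNReal.ofReal (N₀ / (w (e ^ k) * e ^ α₁)) :=
    fun k => shell_bound hα₁ hint he0 (pow_pos he0 k) (hwk k)
  set E := e ^ α₁ with hEdef
  have hE : 0 < E := Real.rpow_pos_of_pos he0 _
  refine ⟨?_, ?_, ?_⟩
  · -- part (b)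
    by_contra hI
    -- nondegeneracy data
    obtain ⟨μ0, hμ0levy, -, hμ0le, -, c0, hc0, hc0int⟩ := hA.nondeg
    have hξ : ∃ ξ : Rd d, ‖ξ‖ = 1 :=
      ⟨EuclideanSpace.single ⟨0, hd⟩ (1:ℝ), by simp [EuclideanSpace.norm_single]⟩
    obtain ⟨ξ, hξ1⟩ := hξ
    -- find an annulus of positive `μ0`-measure
    have hann : ∃ n : ℕ, μ0 {y : Rd d | 1/((n:ℝ)+1) ≤ ‖y‖ ∧ ‖y‖ ≤ 1} ≠ 0 := by
      by_contra hz
      push_neg at hz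
      have hcov : {y : Rd d | ‖y‖ ≤ 1} ⊆
          {(0:Rd d)} ∪ ⋃ n : ℕ, {y : Rd d | 1/((n:ℝ)+1) ≤ ‖y‖ ∧ ‖y‖ ≤ 1} := by
        intro y hy
        rcases eq_or_ne y 0 with h0 | h0
        · exact Or.inl (by simp [h0])
        · right
          obtain ⟨n, hn⟩ := exists_nat_one_div_lt (norm_pos_iff.2 h0)
          exact mem_iUnion.2 ⟨n, hn.le, hy⟩
      have hz2 : μ0 {y : Rd d | ‖y‖ ≤ 1} = 0 := by
        refine le_antisymm ((measure_mono hcov).trans ?_) zero_le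
        calc μ0 ({(0:Rd d)} ∪ ⋃ n : ℕ, {y : Rd d | 1/((n:ℝ)+1) ≤ ‖y‖ ∧ ‖y‖ ≤ 1})
            ≤ μ0 {(0:Rd d)} +
              μ0 (⋃ n : ℕ, {y : Rd d | 1/((n:ℝ)+1) ≤ ‖y‖ ∧ ‖y‖ ≤ 1}) := measure_union_le _ _
          _ ≤ 0 + 0 := by
              refine add_le_add (le_of_eq hμ0levy.1) (le_of_eq ?_)
              exact measure_iUnion_null fun n => hz n
          _ = 0 := by simp
      have := hc0int ξ hξ1
      rw [Measure.restrict_eq_zero.2 hz2, integral_zero_measure] at this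
      exact absurd this (not_le.2 hc0)
    obtain ⟨n₀, hn₀⟩ := hann
    set δ : ℝ := 1/((n₀:ℝ)+1) with hδdef
    have hδ0 : 0 < δ := by positivity
    set A : Set (Rd d) := {y : Rd d | δ ≤ ‖y‖ ∧ ‖y‖ ≤ 1} with hAdef
    set m : ℝ≥0∞ := μ0 A with hmdef
    have hm : 0 < m := pos_iff_ne_zero.2 hn₀
    have hlδ : 0 < l δ⁻¹ := sp.l_pos _ (inv_pos.2 hδ0)
    set c1 : ℝ≥0∞ := ENNReal.ofReal (l δ⁻¹)⁻¹ * min m 1 with hc1def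
    have hc1pos : 0 < c1 := by
      refine ENNReal.mul_pos ?_ ?_
      · exact (ENNReal.ofReal_pos.2 (inv_pos.2 hlδ)).ne'
      · exact (lt_min hm zero_lt_one).ne'
    -- the key uniform lower bound
    have hmain : ∀ R : ℝ, 0 < R →
        c1 ≤ ∫⁻ y in {y : Rd d | ‖y‖ ≤ R}, ENNReal.ofReal (w ‖y‖) ∂ν := by
      intro R hR
      have hwR : 0 < w R := sp.w_pos R hR
      set F : Rd d → ℝ≥0∞ := fun z => ENNReal.ofReal (w (R * ‖z‖)) with hFdef
      have h3 : ENNReal.ofReal (w R / l δ⁻¹) * min m 1 ≤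
          ∫⁻ z in {z : Rd d | ‖z‖ ≤ 1}, F z ∂μ0 := by
        have hpt : ∀ z ∈ A, ENNReal.ofReal (w R / l δ⁻¹) ≤ F z := by
          intro z hz
          obtain ⟨hz1, hz2⟩ := hz
          have hz0 : 0 < ‖z‖ := lt_of_lt_of_le hδ0 hz1
          apply ENNReal.ofReal_le_ofReal
          rw [div_le_iff₀ hlδ]
          have h4 : w (‖z‖⁻¹ * (R * ‖z‖)) ≤ l ‖z‖⁻¹ * w (R * ‖z‖) :=
            sp.scale _ (inv_pos.2 hz0) _ (mul_pos hR hz0)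
          have h5 : ‖z‖⁻¹ * (R * ‖z‖) = R := by field_simp
          rw [h5] at h4
          refine h4.trans ?_
          have h6 : ‖z‖⁻¹ ≤ δ⁻¹ := by
            apply inv_anti₀ hδ0 hz1
          exact mul_le_mul_of_nonneg_right
            (sp.l_mono (mem_Ioi.2 (inv_pos.2 hz0)) (mem_Ioi.2 (inv_pos.2 hδ0)) h6)
            (sp.w_pos _ (mul_pos hR hz0)).le |>.trans
            (le_of_eq (mul_comm _ _))
        have hAmeas : MeasurableSet A :=
          (measurableSet_le measurable_const measurable_norm).inter
            (measurableSet_le measurable_norm measurable_const)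
        calc ENNReal.ofReal (w R / l δ⁻¹) * min m 1
            ≤ ENNReal.ofReal (w R / l δ⁻¹) * m := mul_le_mul_right (min_le_left _ _) _
          _ = ∫⁻ _ in A, ENNReal.ofReal (w R / l δ⁻¹) ∂μ0 := (setLIntegral_const _ _).symm
          _ ≤ ∫⁻ z in A, F z ∂μ0 := setLIntegral_mono' hAmeas hpt
          _ ≤ ∫⁻ z in {z : Rd d | ‖z‖ ≤ 1}, F z ∂μ0 :=
              lintegral_mono_set fun z hz => hz.2
      have h1 : (∫⁻ z in {z : Rd d | ‖z‖ ≤ 1}, F z ∂μ0) ≤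
          ∫⁻ z in {z : Rd d | ‖z‖ ≤ 1}, F z ∂(nuTilde w ν R) :=
        lintegral_mono' (Measure.restrict_mono subset_rfl (hμ0le R hR)) le_rfl
      have h2 : (∫⁻ z in {z : Rd d | ‖z‖ ≤ 1}, F z ∂(nuTilde w ν R)) ≤
          ENNReal.ofReal (w R) * ∫⁻ y in {y : Rd d | ‖y‖ ≤ R},
            ENNReal.ofReal (w ‖y‖) ∂ν := by
        have hFc : ∀ y : Rd d, F (R⁻¹ • y) = ENNReal.ofReal (w ‖y‖) := by
          intro y
          simp only [hFdef]
          congr 1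
          rw [norm_smul, norm_inv, Real.norm_eq_abs, abs_of_pos hR]
          congr 1
          field_simp
        calc (∫⁻ z in {z : Rd d | ‖z‖ ≤ 1}, F z ∂(nuTilde w ν R))
            ≤ ENNReal.ofReal (w R) * ∫⁻ y in {y : Rd d | ‖y‖ ≤ R}, F (R⁻¹ • y) ∂ν :=
            lintegral_nuTilde_le w ν hR F
          _ = _ := by
            congr 1
            exact lintegral_congr fun y => hFc y
      have hfin : ENNReal.ofReal (w R / l δ⁻¹) * min m 1 ≤
          ENNReal.ofReal (w R) * ∫⁻ y in {y : Rd d | ‖y‖ ≤ R},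
            ENNReal.ofReal (w ‖y‖) ∂ν := h3.trans (h1.trans h2)
      rw [div_eq_mul_inv, ENNReal.ofReal_mul hwR.le, mul_assoc] at hfin
      exact (ENNReal.mul_le_mul_iff_right
        (ENNReal.ofReal_pos.2 hwR).ne' ENNReal.ofReal_ne_top).mp hfin
    -- continuity from above gives the contradiction
    set g : Rd d → ℝ≥0∞ := fun y => ENNReal.ofReal (w ‖y‖) with hgdef
    set κ : Measure (Rd d) := ν.withDensity g with hκdef
    set B : ℕ → Set (Rd d) := fun n => {y : Rd d | ‖y‖ ≤ 1/((n:ℝ)+1)} with hBdef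
    have hBmeas : ∀ n, MeasurableSet (B n) :=
      fun n => measurableSet_le measurable_norm measurable_const
    have hκB : ∀ n, κ (B n) = ∫⁻ y in B n, g y ∂ν :=
      fun n => withDensity_apply g (hBmeas n)
    have hB0 : B 0 = {y : Rd d | ‖y‖ ≤ 1} := by
      simp only [hBdef]
      norm_num
    have hκfin : κ (B 0) ≠ ⊤ := by
      rw [hκB 0, hB0]
      exact hI
    have hBanti : Antitone B := by
      intro i j hij y hy
      simp only [hBdef, mem_setOf_eq] at hy ⊢
      refine le_trans hy ?_
      apply one_div_le_one_div_of_le (by positivity)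
      exact add_le_add (Nat.cast_le.2 hij) le_rfl
    have hiInter : (⋂ n, B n) = {(0:Rd d)} := by
      ext y
      simp only [mem_iInter, mem_setOf_eq, mem_singleton_iff, hBdef]
      constructor
      · intro h
        by_contra h0
        obtain ⟨n, hn⟩ := exists_nat_one_div_lt (norm_pos_iff.2 h0)
        exact absurd (h n) (not_le.2 hn)
      · intro h
        subst h
        intro n
        simp
        positivity
    have htends : Tendsto (κ ∘ B) atTop (𝓝 (κ (⋂ n, B n))) :=
      tendsto_measure_iInter_atTop (fun n => (hBmeas n).nullMeasurableSet) hBanti ⟨0, hκfin⟩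
    have hlim0 : κ (⋂ n, B n) = 0 := by
      rw [hiInter, hκdef, withDensity_apply g (measurableSet_singleton _),
        Measure.restrict_eq_zero.2 hν0]
      simp
    have hge : c1 ≤ κ (⋂ n, B n) := by
      refine ge_of_tendsto htends (Filter.Eventually.of_forall fun n => ?_)
      rw [Function.comp_apply, hκB n]
      exact hmain (1/((n:ℝ)+1)) (by positivity)
    rw [hlim0] at hge
    exact absurd hge (not_le.2 hc1pos)
  · -- part (c)
    intro ε hε
    set q : ℝ := (1/2 : ℝ) ^ ε with hqdef
    have hq0 : 0 ≤ q := by positivity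
    have hq1 : q < 1 := pow_lt_one₀ (by norm_num) (by norm_num) hε.ne'
    set C : ℝ := L ^ (1+ε) * N₀ / E with hCdef
    have hC0 : 0 ≤ C := by positivity
    have hSbound : ∀ k : ℕ,
        (∫⁻ y in {y : Rd d | e * e ^ k < ‖y‖ ∧ ‖y‖ ≤ e ^ k},
          ENNReal.ofReal ((w ‖y‖) ^ (1+ε)) ∂ν) ≤ ENNReal.ofReal (C * q ^ k) := by
      intro k
      set wk := w (e ^ k) with hwkdef
      have hwkpos : 0 < wk := hwk k
      have hpt : ∀ y ∈ {y : Rd d | e * e ^ k < ‖y‖ ∧ ‖y‖ ≤ e ^ k},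
          ENNReal.ofReal ((w ‖y‖) ^ (1+ε)) ≤ ENNReal.ofReal ((L * wk) ^ (1+ε)) := by
        intro y hy
        have hy0 : 0 < ‖y‖ :=
          lt_of_le_of_lt (by positivity) hy.1
        apply ENNReal.ofReal_le_ofReal
        exact pow_le_pow_left₀ (sp.w_pos _ hy0).le (hwle k y hy0 hy.2) _
      have hkey : (L * wk) ^ (1+ε) * (N₀ / (wk * E)) ≤ C * q ^ k := by
        have heq : (L * wk) ^ (1+ε) * (N₀ / (wk * E)) = (L ^ (1+ε) * N₀ / E) * wk ^ ε := by
          field_simp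
          ring
        rw [heq, hCdef]
        apply mul_le_mul_of_nonneg_left _ (by positivity)
        calc wk ^ ε ≤ ((1/2 : ℝ) ^ k) ^ ε :=
              pow_le_pow_left₀ hwkpos.le (hwk2 k) _
          _ = q ^ k := by rw [← pow_mul, mul_comm, pow_mul]
      calc (∫⁻ y in {y : Rd d | e * e ^ k < ‖y‖ ∧ ‖y‖ ≤ e ^ k},
              ENNReal.ofReal ((w ‖y‖) ^ (1+ε)) ∂ν)
          ≤ ∫⁻ _ in {y : Rd d | e * e ^ k < ‖y‖ ∧ ‖y‖ ≤ e ^ k},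
              ENNReal.ofReal ((L * wk) ^ (1+ε)) ∂ν := setLIntegral_mono' (meas_shell' _ _) hpt
        _ = ENNReal.ofReal ((L * wk) ^ (1+ε)) *
              ν {y : Rd d | e * e ^ k < ‖y‖ ∧ ‖y‖ ≤ e ^ k} := setLIntegral_const _ _
        _ ≤ ENNReal.ofReal ((L * wk) ^ (1+ε)) * ENNReal.ofReal (N₀ / (wk * E)) :=
              mul_le_mul_right (hshell k) _
        _ = ENNReal.ofReal ((L * wk) ^ (1+ε) * (N₀ / (wk * E))) :=
              (ENNReal.ofReal_mul (by positivity)).symm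
        _ ≤ ENNReal.ofReal (C * q ^ k) := ENNReal.ofReal_le_ofReal hkey
    calc (∫⁻ y in {y : Rd d | ‖y‖ ≤ 1}, ENNReal.ofReal ((w ‖y‖) ^ (1+ε)) ∂ν)
        ≤ ∑' k : ℕ, ∫⁻ y in {y : Rd d | e * e ^ k < ‖y‖ ∧ ‖y‖ ≤ e ^ k},
            ENNReal.ofReal ((w ‖y‖) ^ (1+ε)) ∂ν := lintegral_ball_le_tsum ν hν0 _ he1
      _ ≤ ∑' k : ℕ, ENNReal.ofReal (C * q ^ k) := ENNReal.tsum_le_tsum hSbound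
      _ < ⊤ := geom_tsum_lt_top hq0 hq1
  · -- part (d)
    intro ε hε
    set q : ℝ := e ^ ε with hqdef
    have hq0 : 0 ≤ q := by positivity
    have hq1 : q < 1 := pow_lt_one₀ he0.le he1 hε.ne'
    set C : ℝ := L * N₀ / E with hCdef
    have hSbound : ∀ k : ℕ,
        (∫⁻ y in {y : Rd d | e * e ^ k < ‖y‖ ∧ ‖y‖ ≤ e ^ k},
          ENNReal.ofReal (‖y‖ ^ ε * w ‖y‖) ∂ν) ≤ ENNReal.ofReal (C * q ^ k) := by
      intro k
      set wk := w (e ^ k) with hwkdef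
      have hwkpos : 0 < wk := hwk k
      have hek : (0:ℝ) < e ^ k := pow_pos he0 k
      have hpt : ∀ y ∈ {y : Rd d | e * e ^ k < ‖y‖ ∧ ‖y‖ ≤ e ^ k},
          ENNReal.ofReal (‖y‖ ^ ε * w ‖y‖) ≤
            ENNReal.ofReal ((e ^ k) ^ ε * (L * wk)) := by
        intro y hy
        have hy0 : 0 < ‖y‖ := lt_of_le_of_lt (by positivity) hy.1
        apply ENNReal.ofReal_le_ofReal
        apply mul_le_mul
        · exact pow_le_pow_left₀ (norm_nonneg y) hy.2 _
        · exact hwle k y hy0 hy.2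
        · exact (sp.w_pos _ hy0).le
        · positivity
      have hkey : (e ^ k) ^ ε * (L * wk) * (N₀ / (wk * E)) ≤ C * q ^ k := by
        have heq : (e ^ k) ^ ε * (L * wk) * (N₀ / (wk * E)) = (L * N₀ / E) * q ^ k := by
          rw [hqdef, ← pow_mul, ← pow_mul, mul_comm ε k]
          field_simp
        rw [heq, hCdef]
      calc (∫⁻ y in {y : Rd d | e * e ^ k < ‖y‖ ∧ ‖y‖ ≤ e ^ k},
              ENNReal.ofReal (‖y‖ ^ ε * w ‖y‖) ∂ν)
          ≤ ∫⁻ _ in {y : Rd d | e * e ^ k < ‖y‖ ∧ ‖y‖ ≤ e ^ k},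
              ENNReal.ofReal ((e ^ k) ^ ε * (L * wk)) ∂ν :=
            setLIntegral_mono' (meas_shell' _ _) hpt
        _ = ENNReal.ofReal ((e ^ k) ^ ε * (L * wk)) *
              ν {y : Rd d | e * e ^ k < ‖y‖ ∧ ‖y‖ ≤ e ^ k} := setLIntegral_const _ _
        _ ≤ ENNReal.ofReal ((e ^ k) ^ ε * (L * wk)) * ENNReal.ofReal (N₀ / (wk * E)) :=
              mul_le_mul_right (hshell k) _
        _ = ENNReal.ofReal ((e ^ k) ^ ε * (L * wk) * (N₀ / (wk * E))) :=
              (ENNReal.ofReal_mul (by positivity)).symm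
        _ ≤ ENNReal.ofReal (C * q ^ k) := ENNReal.ofReal_le_ofReal hkey
    calc (∫⁻ y in {y : Rd d | ‖y‖ ≤ 1}, ENNReal.ofReal (‖y‖ ^ ε * w ‖y‖) ∂ν)
        ≤ ∑' k : ℕ, ∫⁻ y in {y : Rd d | e * e ^ k < ‖y‖ ∧ ‖y‖ ≤ e ^ k},
            ENNReal.ofReal (‖y‖ ^ ε * w ‖y‖) ∂ν := lintegral_ball_le_tsum ν hν0 _ he1
      _ ≤ ∑' k : ℕ, ENNReal.ofReal (C * q ^ k) := ENNReal.tsum_le_tsum hSbound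
      _ < ⊤ := geom_tsum_lt_top hq0 hq1
end
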